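/- Locality of the discrete Bass realization: let k and i be nodes such that k is not influential to i (that is, k ≠ i and there is no finite directed path along edges of positive weight from k to i). If ω, ω' : Fin N → Fin M → ℝ agree in all coordinates except possibly those of node k (i.e., ω_{n,m} = ω'_{n,m} whenever m ≠ k), then X(ω) n i = X(ω') n i for every step n ≤ N; in particular G_i(ω) = G_i(ω'). -/
import Mathlib


open MeasureTheory

/-- Discrete Bass realization: adoption state of node `j` after `n` time steps,
for the realization `ω : Fin N → Fin M → ℝ` of the uniform variables. -/
noncomputable def bassX (M N : ℕ) (dt : ℝ) (p : Fin M → ℝ) (q : Fin M → Fin M → ℝ)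
    (ω : Fin N → Fin M → ℝ) : ℕ → Fin M → Bool
  | 0, _ => false
  | n + 1, j =>
    if h : n < N then
      bassX M N dt p q ω n j ||
        (if ω ⟨n, h⟩ j ≤
            (p j + ∑ k, q k j * (if bassX M N dt p q ω n k = true then (1 : ℝ) else 0)) * dt
          then true else false)
    else
      bassX M N dt p q ω n j

/-- Nonadoption indicator of node `i` after `N` steps. -/
noncomputable def bassG (M N : ℕ) (dt : ℝ) (p : Fin M → ℝ) (q : Fin M → Fin M → ℝ)
    (i : Fin M) (ω : Fin N → Fin M → ℝ) : ℝ :=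
  if bassX M N dt p q ω N i = false then 1 else 0

/-- Uniform probability measure on the cube `[0,1]^{N×M}`. -/
noncomputable def cubeMeasure (N M : ℕ) : Measure (Fin N → Fin M → ℝ) :=
  Measure.pi fun _ => Measure.pi fun _ => volume.restrict (Set.Icc (0 : ℝ) 1)


/-- `k` is influential to `i`: `k = i`, or there is a finite directed path of
positive-weight edges from `k` to `i`. -/
def influential (M : ℕ) (q : Fin M → Fin M → ℝ) (k i : Fin M) : Prop :=
  Relation.ReflTransGen (fun a b => 0 < q a b) k i

/-- Locality of the discrete Bass realization: if `k` is not influential to `i`,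
then the state of `i` does not depend on the coordinates of node `k`. -/
theorem bass_locality
    (M N : ℕ) (hM : 1 ≤ M) (hN : 1 ≤ N) (dt : ℝ) (hdt : 0 < dt)
    (p : Fin M → ℝ) (hp : ∀ j, 0 ≤ p j)
    (q : Fin M → Fin M → ℝ) (hq : ∀ k j, 0 ≤ q k j) (hqdiag : ∀ j, q j j = 0)
    (k i : Fin M) (hki : ¬ influential M q k i)
    (ω ω' : Fin N → Fin M → ℝ) (hagree : ∀ n (m : Fin M), m ≠ k → ω n m = ω' n m) :
    (∀ n, n ≤ N → bassX M N dt p q ω n i = bassX M N dt p q ω' n i) ∧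
      bassG M N dt p q i ω = bassG M N dt p q i ω' := by
  have key : ∀ n, ∀ m : Fin M, ¬ influential M q k m →
      bassX M N dt p q ω n m = bassX M N dt p q ω' n m := by
    intro n
    induction n with
    | zero => intro m _; rfl
    | succ n ih =>
      intro m hm
      have hmk : m ≠ k := by
        intro h; exact hm (h ▸ Relation.ReflTransGen.refl)
      simp only [bassX]
      by_cases h : n < N
      · simp only [h, dif_pos]
        have hsum : (p m + ∑ j, q j m * (if bassX M N dt p q ω n j = true then (1:ℝ) else 0))
            = (p m + ∑ j, q j m * (if bassX M N dt p q ω' n j = true then (1:ℝ) else 0)) := by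
          congr 1
          apply Finset.sum_congr rfl
          intro j _
          by_cases hqj : q j m = 0
          · simp [hqj]
          · have hpos : 0 < q j m := lt_of_le_of_ne (hq j m) (Ne.symm hqj)
            have hj : ¬ influential M q k j := by
              intro hkj; exact hm (hkj.tail hpos)
            rw [ih j hj]
        rw [ih m hm, hsum, hagree ⟨n, h⟩ m hmk]
      · simp only [h, dif_neg, not_false_iff]; exact ih m hm
  refine ⟨fun n _ => key n i hki, ?_⟩
  unfold bassG
  rw [key N i hki]
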